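/- Let R be an axis-aligned rectangle contained in a polygon P, let b ∈ P be a point, and suppose the rectangular hull RH(R ∪ {b}) (the smallest axis-aligned rectangle containing R and b) is contained in P. Then b covers R: for every point p ∈ R, b attracts p and p attracts b. -/
import Mathlib


open Set

/-- Euclidean distance between points of the plane `ℝ × ℝ`. -/
noncomputable def euclDist (p q : ℝ × ℝ) : ℝ :=
  Real.sqrt ((p.1 - q.1) ^ 2 + (p.2 - q.2) ^ 2)

/-- A beacon at `q` attracts the point `p` in the region `P`. -/
def Attracts (P : Set (ℝ × ℝ)) (q p : ℝ × ℝ) : Prop :=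
  ∃ γ : ℝ → ℝ × ℝ, ContinuousOn γ (Icc 0 1) ∧ γ 0 = p ∧ γ 1 = q ∧
    (∀ t ∈ Icc (0 : ℝ) 1, γ t ∈ P) ∧
    AntitoneOn (fun t => euclDist (γ t) q) (Icc 0 1)

/-- `p` covers `q`: each attracts the other. -/
def Covers (P : Set (ℝ × ℝ)) (p q : ℝ × ℝ) : Prop :=
  Attracts P p q ∧ Attracts P q p

lemma attracts_of_convex {S P : Set (ℝ × ℝ)} (hconv : Convex ℝ S) (hSP : S ⊆ P)
    {p q : ℝ × ℝ} (hp : p ∈ S) (hq : q ∈ S) : Attracts P q p := by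
  refine ⟨fun t => (1 - t) • p + t • q, ?_, by simp, by simp, ?_, ?_⟩
  · fun_prop
  · intro t ht
    exact hSP (hconv hp hq (by linarith [ht.2]) ht.1 (by ring))
  · have key : ∀ u ∈ Icc (0:ℝ) 1,
        euclDist ((1 - u) • p + u • q) q = (1 - u) * euclDist p q := by
      intro u hu
      have h1 : ((1 - u) • p + u • q).1 - q.1 = (1 - u) * (p.1 - q.1) := by
        simp [Prod.smul_def, Prod.add_def, smul_eq_mul]; ring
      have h2 : ((1 - u) • p + u • q).2 - q.2 = (1 - u) * (p.2 - q.2) := by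
        simp [Prod.smul_def, Prod.add_def, smul_eq_mul]; ring
      unfold euclDist
      rw [h1, h2]
      have : (1 - u) * (p.1 - q.1) ^ 2 * (1 - u) + ((1 - u) * (p.2 - q.2) ^ 2 * (1 - u))
          = (1 - u) ^ 2 * ((p.1 - q.1) ^ 2 + (p.2 - q.2) ^ 2) := by ring
      rw [mul_pow, mul_pow, ← mul_add, Real.sqrt_mul (by positivity),
        Real.sqrt_sq (by linarith [hu.2])]
    intro s hs t ht hst
    simp only
    rw [key s hs, key t ht]
    exact mul_le_mul_of_nonneg_right (by linarith) (Real.sqrt_nonneg _)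

/-- If `R = [a₁,a₂] × [c₁,c₂]` is an axis-aligned rectangle contained in the
polygon `P`, `b ∈ P`, and the rectangular hull `RH(R ∪ {b})` (the smallest
axis-aligned rectangle containing `R` and `b`) is contained in `P`, then `b`
covers `R`: for every `p ∈ R`, `b` attracts `p` and `p` attracts `b`. -/
theorem hull_contained_covers (P : Set (ℝ × ℝ)) (a₁ a₂ c₁ c₂ : ℝ)
    (ha : a₁ ≤ a₂) (hc : c₁ ≤ c₂) (b : ℝ × ℝ)
    (hR : Icc a₁ a₂ ×ˢ Icc c₁ c₂ ⊆ P) (hb : b ∈ P)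
    (hhull : Icc (min a₁ b.1) (max a₂ b.1) ×ˢ Icc (min c₁ b.2) (max c₂ b.2) ⊆ P) :
    ∀ p ∈ Icc a₁ a₂ ×ˢ Icc c₁ c₂, Attracts P b p ∧ Attracts P p b ∧ Covers P b p := by
  intro p hp
  have hconv : Convex ℝ (Icc (min a₁ b.1) (max a₂ b.1) ×ˢ Icc (min c₁ b.2) (max c₂ b.2)) :=
    (convex_Icc _ _).prod (convex_Icc _ _)
  have hpH : p ∈ Icc (min a₁ b.1) (max a₂ b.1) ×ˢ Icc (min c₁ b.2) (max c₂ b.2) := by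
    obtain ⟨⟨h1, h2⟩, h3, h4⟩ := hp
    exact ⟨⟨le_trans (min_le_left _ _) h1, le_trans h2 (le_max_left _ _)⟩,
      ⟨le_trans (min_le_left _ _) h3, le_trans h4 (le_max_left _ _)⟩⟩
  have hbH : b ∈ Icc (min a₁ b.1) (max a₂ b.1) ×ˢ Icc (min c₁ b.2) (max c₂ b.2) :=
    ⟨⟨min_le_right _ _, le_max_right _ _⟩, ⟨min_le_right _ _, le_max_right _ _⟩⟩
  have h1 : Attracts P b p := attracts_of_convex hconv hhull hpH hbH
  have h2 : Attracts P p b := attracts_of_convex hconv hhull hbH hpH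
  exact ⟨h1, h2, h1, h2⟩
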